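/- Let R be an Ore domain with a valuation υ : R → G ∪ {∞} for an ordered group (G,<). Then the set H of nonzero homogeneous elements of the associated graded ring gr_υ(R) is an Ore subset of gr_υ(R). -/

import Mathlib

/-- An abstract characterization of the associated graded ring `gr_υ(R)` of a valuation
filtration (see Statement 3 for explanation of the fields). -/
structure IsAssociatedGradedRing (R : Type) [Ring R] (G : Type) [Group G] [LinearOrder G]
    (F : G → Set R) (A : Type) [Ring A] (φ : G → R → A) : Prop where
  map_add : ∀ g : G, ∀ x y : R, x ∈ F g → y ∈ F g → φ g (x + y) = φ g x + φ g y
  zero_iff : ∀ g : G, ∀ x : R, x ∈ F g → (φ g x = 0 ↔ (x = 0 ∨ ∃ h > g, x ∈ F h))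
  map_mul : ∀ g h : G, ∀ x y : R, x ∈ F g → y ∈ F h → φ g x * φ h y = φ (g * h) (x * y)
  map_one : φ 1 1 = 1
  gen : AddSubgroup.closure (⋃ g : G, φ g '' F g) = (⊤ : AddSubgroup A)
  indep : ∀ (s : Finset G) (c : G → R), (∀ g ∈ s, c g ∈ F g) →
    (∑ g ∈ s, φ g (c g)) = 0 → ∀ g ∈ s, φ g (c g) = 0

/-- Let `R` be an Ore domain with a valuation `υ : R → G ∪ {∞}` for an
ordered group `(G,<)` (encoded by `υ : R → G` on nonzero elements).  Then the set `H` of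
nonzero homogeneous elements of the associated graded ring `gr_υ(R)` is an Ore subset of
`gr_υ(R)`: it is multiplicatively closed and satisfies the Ore condition. -/
theorem homogeneous_elements_ore_subset_of_graded
    (R : Type) [Ring R] [IsDomain R]
    -- `R` is a (left) Ore domain
    (hOre : ∀ a b : R, b ≠ 0 → ∃ c d : R, d ≠ 0 ∧ d * a = c * b)
    (G : Type) [Group G] [LinearOrder G]
    [CovariantClass G G (· * ·) (· < ·)]
    [CovariantClass G G (Function.swap (· * ·)) (· < ·)]
    (υ : R → G)
    (hadd : ∀ x y : R, x ≠ 0 → y ≠ 0 → x + y ≠ 0 → min (υ x) (υ y) ≤ υ (x + y))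
    (hmul : ∀ x y : R, x ≠ 0 → y ≠ 0 → υ (x * y) = υ x * υ y)
    -- the associated graded ring `gr_υ(R)` of the filtration induced by `υ`
    (A : Type) [Ring A] (φ : G → R → A)
    (hA : IsAssociatedGradedRing R G (fun g => {x : R | x = 0 ∨ g ≤ υ x}) A φ) :
    -- `H`, the set of nonzero homogeneous elements, is multiplicatively closed …
    (∀ a b : A, a ≠ 0 → b ≠ 0 →
      (∃ g : G, ∃ x : R, (x = 0 ∨ g ≤ υ x) ∧ a = φ g x) →
      (∃ h : G, ∃ y : R, (y = 0 ∨ h ≤ υ y) ∧ b = φ h y) →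
      a * b ≠ 0 ∧ ∃ l : G, ∃ z : R, (z = 0 ∨ l ≤ υ z) ∧ a * b = φ l z) ∧
    -- … and satisfies the Ore condition in `gr_υ(R)`
    (∀ a : A, a ≠ 0 → (∃ g : G, ∃ x : R, (x = 0 ∨ g ≤ υ x) ∧ a = φ g x) →
      ∀ f : A, ∃ b c : A, b ≠ 0 ∧
        (∃ h : G, ∃ y : R, (y = 0 ∨ h ≤ υ y) ∧ b = φ h y) ∧
        b * f = c * a) := by
  obtain ⟨hmap_add, hzero, hmulφ, hone, hgen, hindep⟩ := hA
  -- basic valuation facts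
  have hυ1 : υ 1 = 1 := by
    have h := hmul 1 1 one_ne_zero one_ne_zero
    rw [mul_one] at h
    exact (mul_left_cancel (show υ 1 * 1 = υ 1 * υ 1 by rw [mul_one]; exact h)).symm
  have hsq : ∀ g : G, g * g = 1 → g = 1 := by
    intro g hg
    rcases lt_trichotomy g 1 with h | h | h
    · have h1 : g * g < g * 1 := mul_lt_mul_right h g
      rw [mul_one, hg] at h1
      exact absurd (h1.trans h) (lt_irrefl 1)
    · exact h
    · have h1 : g * 1 < g * g := mul_lt_mul_right h g
      rw [mul_one, hg] at h1
      exact absurd (h.trans h1) (lt_irrefl 1)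
  have hυneg : ∀ x : R, x ≠ 0 → υ (-x) = υ x := by
    intro x hx
    have hn1 : (-1 : R) ≠ 0 := neg_ne_zero.mpr one_ne_zero
    have hm : υ ((-1 : R) * (-1)) = υ (-1) * υ (-1) := hmul _ _ hn1 hn1
    rw [neg_mul_neg, one_mul, hυ1] at hm
    have hv1 : υ (-1 : R) = 1 := hsq _ hm.symm
    have : υ ((-1 : R) * x) = υ (-1) * υ x := hmul _ _ hn1 hx
    rw [neg_one_mul, hv1, one_mul] at this
    exact this
  -- basic graded facts
  have hφ0 : ∀ g : G, φ g 0 = 0 := fun g =>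
    (hzero g 0 (Or.inl rfl)).mpr (Or.inl rfl)
  have hφ_ne : ∀ (g : G) (x : R), x ≠ 0 → υ x = g → φ g x ≠ 0 := by
    intro g x hx hg h0
    rcases (hzero g x (Or.inr hg.ge)).mp h0 with h | ⟨k, hk, hmem⟩
    · exact hx h
    · rcases hmem with h' | h'
      · exact hx h'
      · rw [hg] at h'
        exact absurd hk (not_lt.mpr h')
  have hφ_char : ∀ (g : G) (x : R), (x = 0 ∨ g ≤ υ x) → φ g x ≠ 0 → x ≠ 0 ∧ υ x = g := by
    intro g x hmem hne
    have hx : x ≠ 0 := by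
      rintro rfl
      exact hne (hφ0 g)
    rcases hmem with h | h
    · exact absurd h hx
    refine ⟨hx, ?_⟩
    by_contra hne'
    have hlt : g < υ x := lt_of_le_of_ne h (fun e => hne' e.symm)
    exact hne ((hzero g x (Or.inr h)).mpr (Or.inr ⟨υ x, hlt, Or.inr le_rfl⟩))
  have hφ_neg : ∀ (g : G) (x : R), (x = 0 ∨ g ≤ υ x) → φ g (-x) = -φ g x := by
    intro g x hmem
    have hmn : (-x = 0 ∨ g ≤ υ (-x)) := by
      rcases hmem with h | h
      · exact Or.inl (by rw [h, neg_zero])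
      · rcases eq_or_ne x 0 with rfl | hx
        · exact Or.inl neg_zero
        · exact Or.inr (by rw [hυneg x hx]; exact h)
    have h := hmap_add g x (-x) hmem hmn
    rw [add_neg_cancel, hφ0] at h
    exact (neg_eq_of_add_eq_zero_right h.symm).symm
  constructor
  · -- multiplicative closure
    rintro a b ha hb ⟨g, x, hxm, rfl⟩ ⟨h, y, hym, rfl⟩
    obtain ⟨hx, hvx⟩ := hφ_char g x hxm ha
    obtain ⟨hy, hvy⟩ := hφ_char h y hym hb
    have hxy : x * y ≠ 0 := mul_ne_zero hx hy
    have hvxy : υ (x * y) = g * h := by rw [hmul x y hx hy, hvx, hvy]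
    have hprod : φ g x * φ h y = φ (g * h) (x * y) := hmulφ g h x y hxm hym
    refine ⟨?_, g * h, x * y, Or.inr hvxy.ge, hprod⟩
    rw [hprod]
    exact hφ_ne _ _ hxy hvxy
  · -- Ore condition
    rintro a ha ⟨g, x, hxm, rfl⟩ f
    obtain ⟨hx, hvx⟩ := hφ_char g x hxm ha
    have h1A : (1 : A) ≠ 0 := by
      intro h10
      apply ha
      calc φ g x = φ g x * 1 := (mul_one _).symm
        _ = φ g x * 0 := by rw [h10]
        _ = 0 := mul_zero _
    have hf : f ∈ AddSubgroup.closure (⋃ g : G, φ g '' {x : R | x = 0 ∨ g ≤ υ x}) := by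
      rw [hgen]; trivial
    induction hf using AddSubgroup.closure_induction with
    | mem w hw =>
      obtain ⟨_, ⟨k, rfl⟩, wR, hwm, rfl⟩ := hw
      rcases eq_or_ne (φ k wR) 0 with hz | hz
      · exact ⟨1, 0, h1A, ⟨1, 1, Or.inr hυ1.ge, hone.symm⟩, by rw [hz, mul_zero, zero_mul]⟩
      · obtain ⟨hw0, hvw⟩ := hφ_char k wR hwm hz
        obtain ⟨c', d', hd', heq⟩ := hOre wR x hx
        have hc' : c' ≠ 0 := by
          rintro rfl
          rw [zero_mul] at heq
          exact hw0 ((mul_eq_zero.mp heq).resolve_left hd')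
        have hdw : d' * wR ≠ 0 := mul_ne_zero hd' hw0
        have hv1 : υ (d' * wR) = υ d' * k := by rw [hmul _ _ hd' hw0, hvw]
        have hv2 : υ (c' * x) = υ c' * g := by rw [hmul _ _ hc' hx, hvx]
        have hgr : υ d' * k = υ c' * g := by rw [← hv1, heq, hv2]
        refine ⟨φ (υ d') d', φ (υ c') c', hφ_ne _ _ hd' rfl,
          ⟨υ d', d', Or.inr le_rfl, rfl⟩, ?_⟩
        rw [hmulφ _ _ _ _ (Or.inr le_rfl) hwm, hmulφ _ _ _ _ (Or.inr le_rfl) hxm,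
          ← hgr, heq]
    | zero =>
      exact ⟨1, 0, h1A, ⟨1, 1, Or.inr hυ1.ge, hone.symm⟩, by rw [mul_zero, zero_mul]⟩
    | add f₁ f₂ _ _ ih₁ ih₂ =>
      obtain ⟨b₁, c₁, hb₁, ⟨h₁, y₁, hy₁m, rfl⟩, he₁⟩ := ih₁
      obtain ⟨b₂, c₂, hb₂, ⟨h₂, y₂, hy₂m, rfl⟩, he₂⟩ := ih₂
      obtain ⟨hy₁, hvy₁⟩ := hφ_char h₁ y₁ hy₁m hb₁
      obtain ⟨hy₂, hvy₂⟩ := hφ_char h₂ y₂ hy₂m hb₂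
      obtain ⟨c', d', hd', heq⟩ := hOre y₁ y₂ hy₂
      have hc' : c' ≠ 0 := by
        rintro rfl
        rw [zero_mul] at heq
        exact hy₁ ((mul_eq_zero.mp heq).resolve_left hd')
      have hdy : d' * y₁ ≠ 0 := mul_ne_zero hd' hy₁
      have hv1 : υ (d' * y₁) = υ d' * h₁ := by rw [hmul _ _ hd' hy₁, hvy₁]
      have hv2 : υ (c' * y₂) = υ c' * h₂ := by rw [hmul _ _ hc' hy₂, hvy₂]
      have hgr : υ d' * h₁ = υ c' * h₂ := by rw [← hv1, heq, hv2]
      set z₁ : A := φ (υ d') d' with hz₁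
      set z₂ : A := φ (υ c') c' with hz₂
      have hzb : z₁ * φ h₁ y₁ = z₂ * φ h₂ y₂ := by
        rw [hz₁, hz₂, hmulφ _ _ _ _ (Or.inr le_rfl) hy₁m,
          hmulφ _ _ _ _ (Or.inr le_rfl) hy₂m, ← hgr, heq]
      refine ⟨z₁ * φ h₁ y₁, z₁ * c₁ + z₂ * c₂, ?_, ?_, ?_⟩
      · rw [hz₁, hmulφ _ _ _ _ (Or.inr le_rfl) hy₁m]
        exact hφ_ne _ _ hdy hv1
      · exact ⟨υ d' * h₁, d' * y₁, Or.inr hv1.ge,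
          by rw [hz₁, hmulφ _ _ _ _ (Or.inr le_rfl) hy₁m]⟩
      · have e1 : z₁ * φ h₁ y₁ * f₁ = z₁ * c₁ * φ g x := by
          rw [mul_assoc, he₁, ← mul_assoc]
        have e2 : z₁ * φ h₁ y₁ * f₂ = z₂ * c₂ * φ g x := by
          rw [hzb, mul_assoc, he₂, ← mul_assoc]
        rw [mul_add, e1, e2, ← add_mul]
    | neg f' _ ih =>
      obtain ⟨b, c, hb, hbh, he⟩ := ih
      exact ⟨b, -c, hb, hbh, by rw [mul_neg, he, neg_mul]⟩
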